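/- For all integers M, N ≥ 0, the sum over n ≥ 0 of q^{n^2-(M+N)n} / ((q;q)_n (q;q)_{M-n} (q;q)_{N-n}) equals q^{-MN} / ((q;q)_M (q;q)_N), where (q;q)_k denotes the q-Pochhammer symbol and 1/(q;q)_k = 0 for k < 0. -/

import Mathlib

open scoped BigOperators

/-- Finite q-Pochhammer symbol $(a;q)_n = \prod_{j=0}^{n-1}(1-aq^j)$. -/
noncomputable def qPoch (q a : ℂ) (n : ℕ) : ℂ := ∏ j ∈ Finset.range n, (1 - a * q ^ j)

/-- Reciprocal $1/(q;q)_k$ for an integer index, with the convention that it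
vanishes for $k < 0$. -/
noncomputable def qPochRecipZ (q : ℂ) (k : ℤ) : ℂ :=
  if k < 0 then 0 else (qPoch q q k.toNat)⁻¹

lemma one_sub_pow_ne (q : ℂ) (hq : ‖q‖ < 1) (j : ℕ) (hj : j ≠ 0) : 1 - q ^ j ≠ 0 := by
  intro h
  have hq1 : q ^ j = 1 := by linear_combination -h
  have : ‖q ^ j‖ < 1 := by
    rw [norm_pow]
    exact pow_lt_one₀ (norm_nonneg q) hq (by omega)
  rw [hq1, norm_one] at this
  exact lt_irrefl _ this

lemma qPoch_ne_zero (q : ℂ) (hq : ‖q‖ < 1) (n : ℕ) : qPoch q q n ≠ 0 := by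
  rw [qPoch, Finset.prod_ne_zero_iff]
  intro j _
  have : 1 - q * q ^ j = 1 - q ^ (j + 1) := by ring
  rw [this]
  exact one_sub_pow_ne q hq (j + 1) (by omega)

lemma R_natCast (q : ℂ) (n : ℕ) : qPochRecipZ q (n : ℤ) = (qPoch q q n)⁻¹ := by
  simp [qPochRecipZ]

lemma R_neg (q : ℂ) {k : ℤ} (h : k < 0) : qPochRecipZ q k = 0 := by
  simp [qPochRecipZ, h]

lemma L1 (q : ℂ) (hq : ‖q‖ < 1) (hq0 : q ≠ 0) (k : ℤ) :
    (1 - q ^ k) * qPochRecipZ q k = qPochRecipZ q (k - 1) := by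
  rcases lt_trichotomy k 0 with h | h | h
  · rw [R_neg q h, R_neg q (by omega), mul_zero]
  · subst h
    simp [qPochRecipZ]
  · obtain ⟨m, rfl⟩ : ∃ m : ℕ, k = (m : ℤ) + 1 := ⟨(k - 1).toNat, by omega⟩
    have h1 : ((m : ℤ) + 1) = ((m + 1 : ℕ) : ℤ) := by push_cast; ring
    rw [h1, R_natCast, show ((m + 1 : ℕ) : ℤ) - 1 = (m : ℤ) by push_cast; ring, R_natCast,
      zpow_natCast]
    have h2 : qPoch q q (m + 1) = qPoch q q m * (1 - q ^ (m + 1)) := by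
      rw [qPoch, Finset.prod_range_succ, ← qPoch]
      ring
    rw [h2, mul_inv]
    have := one_sub_pow_ne q hq (m + 1) (by omega)
    field_simp

noncomputable def auxT (q : ℂ) (M N : ℕ) (n : ℕ) : ℂ :=
  q ^ ((n : ℤ) ^ 2 - ((M : ℤ) + N) * n) * qPochRecipZ q (n : ℤ) *
    qPochRecipZ q ((M : ℤ) - n) * qPochRecipZ q ((N : ℤ) - n)

lemma auxT_vanish (q : ℂ) (M N n : ℕ) (h : M < n) : auxT q M N n = 0 := by
  rw [auxT, R_neg q (show (M : ℤ) - n < 0 by omega)]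
  ring

lemma lemA (q : ℂ) (hq : ‖q‖ < 1) (hq0 : q ≠ 0) (M N : ℕ) :
    (1 - q ^ ((M : ℤ) + 1)) * auxT q (M + 1) N 0 = auxT q M N 0 := by
  rw [auxT, auxT]
  push_cast
  have h1 := L1 q hq hq0 ((M : ℤ) + 1)
  rw [show ((M : ℤ) + 1 - 1) = (M : ℤ) by ring] at h1
  rw [show ((M : ℤ) + 1 - 0) = (M : ℤ) + 1 by ring, show ((M : ℤ) - 0) = (M : ℤ) by ring]
  rw [← h1]
  ring

lemma lemB (q : ℂ) (hq : ‖q‖ < 1) (hq0 : q ≠ 0) (M N n : ℕ) :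
    (1 - q ^ ((M : ℤ) + 1)) * auxT q (M + 1) N (n + 1)
      = q ^ (-((n : ℤ) + 1)) * auxT q M N (n + 1)
        + (q ^ (-(N : ℤ)) - q ^ (-(n : ℤ))) * auxT q M N n := by
  rw [auxT, auxT, auxT]
  push_cast
  -- relations from L1
  have h1 : qPochRecipZ q ((M : ℤ) - ((n : ℤ) + 1))
      = (1 - q ^ ((M : ℤ) - n)) * qPochRecipZ q ((M : ℤ) - n) := by
    rw [L1 q hq hq0 ((M : ℤ) - n), show ((M : ℤ) - n - 1) = (M : ℤ) - ((n : ℤ) + 1) by ring]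
  have h2 : qPochRecipZ q ((N : ℤ) - ((n : ℤ) + 1))
      = (1 - q ^ ((N : ℤ) - n)) * qPochRecipZ q ((N : ℤ) - n) := by
    rw [L1 q hq hq0 ((N : ℤ) - n), show ((N : ℤ) - n - 1) = (N : ℤ) - ((n : ℤ) + 1) by ring]
  have h3 : qPochRecipZ q (n : ℤ)
      = (1 - q ^ ((n : ℤ) + 1)) * qPochRecipZ q ((n : ℤ) + 1) := by
    rw [L1 q hq hq0 ((n : ℤ) + 1), show ((n : ℤ) + 1 - 1) = (n : ℤ) by ring]
  rw [show ((M : ℤ) + 1 - ((n : ℤ) + 1)) = (M : ℤ) - n by ring, h1, h2, h3]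
  -- exponent normalisation
  have e2 : ((n : ℤ) + 1) ^ 2 - ((M : ℤ) + N) * ((n : ℤ) + 1)
      = (((n : ℤ) + 1) ^ 2 - ((M : ℤ) + 1 + N) * ((n : ℤ) + 1)) + ((n : ℤ) + 1) := by ring
  have e3 : (n : ℤ) ^ 2 - ((M : ℤ) + N) * (n : ℤ)
      = (((n : ℤ) + 1) ^ 2 - ((M : ℤ) + 1 + N) * ((n : ℤ) + 1)) + ((M : ℤ) + N - n) := by ring
  rw [e2, e3,
    zpow_add₀ hq0 (((n : ℤ) + 1) ^ 2 - ((M : ℤ) + 1 + N) * ((n : ℤ) + 1)) ((n : ℤ) + 1),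
    zpow_add₀ hq0 (((n : ℤ) + 1) ^ 2 - ((M : ℤ) + 1 + N) * ((n : ℤ) + 1))
      ((M : ℤ) + N - (n : ℤ))]
  generalize q ^ (((n : ℤ) + 1) ^ 2 - ((M : ℤ) + 1 + N) * ((n : ℤ) + 1)) = E
  generalize qPochRecipZ q ((n : ℤ) + 1) = A
  generalize qPochRecipZ q ((M : ℤ) - n) = B
  generalize qPochRecipZ q ((N : ℤ) - n) = C
  simp only [zpow_add₀ hq0, zpow_sub₀ hq0, zpow_neg, zpow_one, zpow_natCast]
  have hn : (q ^ n : ℂ) ≠ 0 := pow_ne_zero _ hq0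
  have hN : (q ^ N : ℂ) ≠ 0 := pow_ne_zero _ hq0
  field_simp
  ring

lemma Ssum (q : ℂ) (hq : ‖q‖ < 1) (hq0 : q ≠ 0) (M N : ℕ) :
    ∑ n ∈ Finset.range (M + 1), auxT q M N n
      = q ^ (-(M : ℤ) * N) * (qPoch q q M)⁻¹ * (qPoch q q N)⁻¹ := by
  induction M with
  | zero =>
    rw [Finset.sum_range_one, auxT]
    norm_num
    rw [show ((0:ℤ)) = ((0:ℕ) : ℤ) from rfl, R_natCast, R_natCast]
    simp [qPoch]
  | succ M ih =>
    have hone : ((M : ℤ) + 1) = ((M + 1 : ℕ) : ℤ) := by push_cast; ring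
    have hMq : (1 : ℂ) - q ^ ((M : ℤ) + 1) ≠ 0 := by
      rw [hone, zpow_natCast]
      exact one_sub_pow_ne q hq (M + 1) (by omega)
    have key : (1 - q ^ ((M : ℤ) + 1)) * ∑ n ∈ Finset.range (M + 1 + 1), auxT q (M + 1) N n
        = q ^ (-(N : ℤ)) * ∑ n ∈ Finset.range (M + 1), auxT q M N n := by
      rw [Finset.mul_sum,
        Finset.sum_range_succ' (fun n => (1 - q ^ ((M : ℤ) + 1)) * auxT q (M + 1) N n) (M + 1),
        lemA q hq hq0 M N,
        Finset.sum_congr rfl (fun i _ => lemB q hq hq0 M N i),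
        Finset.sum_add_distrib]
      have hshift : ∑ i ∈ Finset.range (M + 1), q ^ (-((i : ℤ) + 1)) * auxT q M N (i + 1)
          = (∑ i ∈ Finset.range (M + 1), q ^ (-(i : ℤ)) * auxT q M N i) - auxT q M N 0 := by
        have h1 := Finset.sum_range_succ' (fun i => q ^ (-(i : ℤ)) * auxT q M N i) (M + 1)
        have h2 := Finset.sum_range_succ (fun i => q ^ (-(i : ℤ)) * auxT q M N i) (M + 1)
        rw [auxT_vanish q M N (M + 1) (by omega), mul_zero, add_zero] at h2
        push_cast at h1
        simp only [neg_zero, zpow_zero, one_mul] at h1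
        linear_combination h2 - h1
      rw [hshift]
      simp_rw [sub_mul]
      rw [Finset.sum_sub_distrib, ← Finset.mul_sum]
      ring
    have hP := qPoch_ne_zero q hq
    have hstep : qPoch q q (M + 1) = qPoch q q M * (1 - q ^ (M + 1)) := by
      rw [qPoch, Finset.prod_range_succ, ← qPoch]; ring
    apply mul_left_cancel₀ hMq
    rw [key, ih]
    rw [show (-(((M : ℕ) + 1 : ℕ) : ℤ) * N) = (-(N : ℤ)) + (-(M : ℤ) * N) by push_cast; ring,
      zpow_add₀ hq0 (-(N : ℤ)) (-(M : ℤ) * N), hstep, hone, zpow_natCast]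
    have h1 := one_sub_pow_ne q hq (M + 1) (by omega)
    rw [mul_inv]
    have hc := mul_inv_cancel₀ h1
    linear_combination
      (-(q ^ (-(N : ℤ)) * q ^ (-(M : ℤ) * N) * (qPoch q q M)⁻¹ * (qPoch q q N)⁻¹)) * hc


/-- Specialised second q-Chu--Vandermonde summation:
$\sum_{n\ge 0} q^{n^2-(M+N)n}/((q;q)_n(q;q)_{M-n}(q;q)_{N-n}) = q^{-MN}/((q;q)_M(q;q)_N)$. -/
theorem qChuVandermonde_special (q : ℂ) (hq : ‖q‖ < 1) (hq0 : q ≠ 0) (M N : ℕ) :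
    ∑' n : ℕ, q ^ ((n : ℤ) ^ 2 - ((M : ℤ) + N) * n) * (qPoch q q n)⁻¹ *
        qPochRecipZ q ((M : ℤ) - n) * qPochRecipZ q ((N : ℤ) - n)
      = q ^ (-(M : ℤ) * N) * (qPoch q q M)⁻¹ * (qPoch q q N)⁻¹ := by
  have hzero : ∀ n ∉ Finset.range (M + 1),
      q ^ ((n : ℤ) ^ 2 - ((M : ℤ) + N) * n) * (qPoch q q n)⁻¹ *
        qPochRecipZ q ((M : ℤ) - n) * qPochRecipZ q ((N : ℤ) - n) = 0 := by
    intro n hn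
    rw [Finset.mem_range, not_lt] at hn
    rw [R_neg q (show (M : ℤ) - n < 0 by omega), mul_zero, zero_mul]
  rw [tsum_eq_sum hzero]
  rw [Finset.sum_congr rfl (fun n _ => by rw [← R_natCast q n, ← auxT])]
  exact Ssum q hq hq0 M N
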